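/- Under the assumptions that g is C¹ on [l,r], strictly positive on (l,r), and satisfies the non-integrability conditions ∫_{w₀}^{l} 1/g = -∞ and ∫_{w₀}^{r} 1/g = +∞, the inverse Φ⁻¹ : ℝ → (l,r) of the Lamperti transform is continuously differentiable with derivative (Φ⁻¹)'(x) = g(Φ⁻¹(x)), and this derivative is uniformly bounded by sup_{y ∈ [l,r]} |g(y)|; in particular Φ⁻¹ is globally Lipschitz continuous with Lipschitz constant sup_{y ∈ [l,r]} |g(y)|. -/

import Mathlib

open MeasureTheory Set Filter Real

/-- The inverse of the Lamperti transform is continuously differentiable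
with derivative `g ∘ Φ⁻¹`, uniformly bounded by `sup_{[l,r]} |g|`; in particular it is
globally Lipschitz with that constant. -/
theorem lamperti_inverse_lipschitz
    (l r w₀ : ℝ) (hlr : l < r) (hw₀ : w₀ ∈ Set.Ioo l r)
    (g : ℝ → ℝ)
    (hg : ContDiffOn ℝ 1 g (Set.Icc l r))
    (hgpos : ∀ x ∈ Set.Ioo l r, 0 < g x)
    (Φ Ψ : ℝ → ℝ)
    (hΦ : ∀ x, Φ x = ∫ w in w₀..x, 1 / g w)
    (hl : Tendsto Φ (nhdsWithin l (Set.Ioo l r)) atBot)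
    (hr : Tendsto Φ (nhdsWithin r (Set.Ioo l r)) atTop)
    (hΨmem : ∀ y, Ψ y ∈ Set.Ioo l r)
    (hΨΦ : ∀ x ∈ Set.Ioo l r, Ψ (Φ x) = x)
    (hΦΨ : ∀ y, Φ (Ψ y) = y)
    (K : ℝ) (hK : K = sSup ((fun y => |g y|) '' Set.Icc l r)) :
    (∀ y, HasDerivAt Ψ (g (Ψ y)) y) ∧
    Continuous (fun y => g (Ψ y)) ∧
    (∀ y, |g (Ψ y)| ≤ K) ∧
    LipschitzWith (Real.toNNReal K) Ψ := by
  -- g is continuous on Ioo l r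
  have hIoo_sub : Set.Ioo l r ⊆ Set.Icc l r := Set.Ioo_subset_Icc_self
  have hgc : ContinuousOn g (Set.Ioo l r) := (hg.continuousOn).mono hIoo_sub
  have hgcat : ∀ x ∈ Set.Ioo l r, ContinuousAt g x := fun x hx =>
    (hg.continuousOn).continuousAt (Icc_mem_nhds hx.1 hx.2)
  -- continuity of 1/g on Ioo
  have hinvc : ContinuousOn (fun w => 1 / g w) (Set.Ioo l r) := by
    simp only [one_div]
    exact hgc.inv₀ (fun x hx => (hgpos x hx).ne')
  have hinvca : ∀ x ∈ Set.Ioo l r, ContinuousAt (fun w => 1 / g w) x := fun x hx => by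
    have := (hgcat x hx).inv₀ (hgpos x hx).ne'
    simp only [one_div]
    exact this
  -- interval integrability of 1/g between points of Ioo
  have hintg : ∀ a ∈ Set.Ioo l r, ∀ b ∈ Set.Ioo l r,
      IntervalIntegrable (fun w => 1 / g w) volume a b := by
    intro a ha b hb
    apply ContinuousOn.intervalIntegrable
    apply hinvc.mono
    exact Set.ordConnected_Ioo.uIcc_subset ha hb
  -- Φ has derivative 1/g x at points of Ioo
  have hΦeq : Φ = fun x => ∫ w in w₀..x, 1 / g w := funext hΦ
  have hΦd : ∀ x ∈ Set.Ioo l r, HasDerivAt Φ (1 / g x) x := by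
    intro x hx
    rw [hΦeq]
    exact intervalIntegral.integral_hasDerivAt_right (hintg w₀ hw₀ x hx)
      (ContinuousOn.stronglyMeasurableAtFilter isOpen_Ioo hinvc x hx)
      (hinvca x hx)
  -- Φ is strictly monotone on Ioo
  have hΦmono : StrictMonoOn Φ (Set.Ioo l r) := by
    apply strictMonoOn_of_hasDerivWithinAt_pos (convex_Ioo l r)
      (fun x hx => ((hΦd x hx).continuousAt).continuousWithinAt)
      (fun x hx => ((hΦd x (interior_subset hx)).hasDerivWithinAt))
    intro x hx
    rw [interior_Ioo] at hx
    exact one_div_pos.mpr (hgpos x hx)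
  -- Ψ is strictly monotone
  have hΨmono : StrictMono Ψ := by
    intro y₁ y₂ h12
    have := hΦmono  -- compare images
    by_contra hle
    push_neg at hle
    have : Φ (Ψ y₂) ≤ Φ (Ψ y₁) := by
      rcases eq_or_lt_of_le hle with h | h
      · rw [h]
      · exact le_of_lt (hΦmono (hΨmem y₂) (hΨmem y₁) h)
    rw [hΦΨ, hΦΨ] at this
    exact absurd this (not_le.mpr h12)
  -- range of Ψ is Ioo l r
  have hrange : Set.range Ψ = Set.Ioo l r := by
    apply Set.Subset.antisymm
    · rintro _ ⟨y, rfl⟩; exact hΨmem y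
    · intro x hx; exact ⟨Φ x, hΨΦ x hx⟩
  -- Ψ is continuous
  have hΨc : Continuous Ψ := by
    rw [continuous_iff_continuousAt]
    intro y
    apply StrictMonoOn.continuousAt_of_image_mem_nhds (s := Set.univ)
      (fun a _ b _ hab => hΨmono hab) univ_mem
    rw [Set.image_univ, hrange]
    exact isOpen_Ioo.mem_nhds (hΨmem y)
  -- derivative of Ψ
  have hderiv : ∀ y, HasDerivAt Ψ (g (Ψ y)) y := by
    intro y
    have hx := hΨmem y
    have hne : (1 / g (Ψ y)) ≠ 0 := one_div_ne_zero (hgpos _ hx).ne'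
    have := HasDerivAt.of_local_left_inverse (hΨc.continuousAt)
      (hΦd (Ψ y) hx) hne (Filter.Eventually.of_forall hΦΨ)
    simpa [one_div] using this
  -- continuity of g ∘ Ψ
  have hcont : Continuous (fun y => g (Ψ y)) := by
    rw [continuous_iff_continuousAt]
    intro y
    exact (hgcat _ (hΨmem y)).comp hΨc.continuousAt
  -- bound
  have hbdd : BddAbove ((fun y => |g y|) '' Set.Icc l r) := by
    apply IsCompact.bddAbove_image isCompact_Icc
    exact (hg.continuousOn.abs)
  have hbound : ∀ y, |g (Ψ y)| ≤ K := by
    intro y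
    rw [hK]
    exact le_csSup hbdd ⟨Ψ y, hIoo_sub (hΨmem y), rfl⟩
  have hK0 : 0 ≤ K := le_trans (abs_nonneg _) (hbound 0)
  -- Lipschitz
  refine ⟨hderiv, hcont, hbound, ?_⟩
  have := Convex.lipschitzOnWith_of_nnnorm_hasDerivWithin_le
    (s := Set.univ) (f' := fun y => g (Ψ y)) (C := Real.toNNReal K) convex_univ
    (fun y _ => (hderiv y).hasDerivWithinAt) ?_
  · exact lipschitzOnWith_univ.mp this
  · intro y _
    rw [← NNReal.coe_le_coe, coe_nnnorm, Real.coe_toNNReal K hK0]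
    simpa [Real.norm_eq_abs] using hbound y
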